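/- Let G be a connected graph with m edges containing an even cycle C_{2k} such that G − E(C_{2k}) has exactly 2k connected components. Then Σ_{e=uv ∈ C_{2k}} (m_u(e|G) − m_v(e|G))² ≤ 2k(m − 2k)², with equality if and only if C_{2k} is an end-block (at most one component of G − E(C_{2k}) contains an edge). -/

import Mathlib

open scoped Classical
open Finset

noncomputable def eDist {V : Type*} (G : SimpleGraph V) (f : Sym2 V) (w : V) : ℕ :=
  Sym2.lift ⟨fun a b => min (G.dist a w) (G.dist b w), fun _ _ => min_comm _ _⟩ f

noncomputable def mCloser {V : Type*} (G : SimpleGraph V) [Fintype V] (u v : V) : ℕ :=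
  (G.edgeFinset.filter fun f => eDist G f u < eDist G f v).card

noncomputable def mEqui {V : Type*} (G : SimpleGraph V) [Fintype V] (u v : V) : ℕ :=
  (G.edgeFinset.filter fun f => eDist G f u = eDist G f v).card

/-- The edge revised Szeged index (each edge `uv` is counted once; the double sum over
ordered adjacent pairs counts it twice, whence the division by 2). -/
noncomputable def szRevE {V : Type*} (G : SimpleGraph V) [Fintype V] : ℚ :=
  (∑ u : V, ∑ v : V, if G.Adj u v then
      ((mCloser G u v : ℚ) + (mEqui G u v : ℚ) / 2) *
        ((mCloser G v u : ℚ) + (mEqui G u v : ℚ) / 2)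
    else 0) / 2

/-- The edges of `G` lying in the connected component `c`. -/
noncomputable def compEdges {V : Type*} (G : SimpleGraph V) [Fintype V]
    (c : G.ConnectedComponent) : Finset (Sym2 V) :=
  G.edgeFinset.filter fun f => ∀ x ∈ f, G.connectedComponentMk x = c

namespace Stmt6Aux

open SimpleGraph

/-- cyclic distance from `d` to `0` on `ZMod n`. -/
def af (n : ℕ) (d : ZMod n) : ℕ := min d.val (n - d.val)

variable {V : Type*} {k : ℕ} {G : SimpleGraph V} {u : ZMod (2*k) → V}

lemma af_succ_lt (hk : 2 ≤ k) (d : ZMod (2*k)) (h : d.val < k) :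
    af (2*k) (d + 1) = af (2*k) d + 1 := by
  haveI : NeZero (2*k) := ⟨by omega⟩
  haveI : Fact (1 < 2*k) := ⟨by omega⟩
  have hv : d.val < 2*k := ZMod.val_lt d
  have h1 : (d + 1).val = (d.val + 1) % (2*k) := by
    rw [ZMod.val_add, ZMod.val_one]
  have h2 : (d.val + 1) % (2*k) = d.val + 1 := Nat.mod_eq_of_lt (by omega)
  unfold af
  rw [h1, h2]
  omega

lemma af_succ_ge (hk : 2 ≤ k) (d : ZMod (2*k)) (h : k ≤ d.val) :
    af (2*k) (d + 1) + 1 = af (2*k) d := by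
  haveI : NeZero (2*k) := ⟨by omega⟩
  haveI : Fact (1 < 2*k) := ⟨by omega⟩
  have hv : d.val < 2*k := ZMod.val_lt d
  have h1 : (d + 1).val = (d.val + 1) % (2*k) := by
    rw [ZMod.val_add, ZMod.val_one]
  unfold af
  rcases Nat.lt_or_ge (d.val + 1) (2*k) with h3 | h3
  · rw [h1, Nat.mod_eq_of_lt h3]; omega
  · have : (d.val + 1) % (2*k) = 0 := by
      have : d.val + 1 = 2*k := by omega
      rw [this, Nat.mod_self]
    rw [h1, this]; omega

lemma af_lt_succ_iff (hk : 2 ≤ k) (d : ZMod (2*k)) :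
    af (2*k) d < af (2*k) (d + 1) ↔ d.val < k := by
  constructor
  · intro h
    by_contra hge
    have := af_succ_ge hk d (by omega)
    omega
  · intro h; rw [af_succ_lt hk d h]; omega

lemma af_succ_lt_iff (hk : 2 ≤ k) (d : ZMod (2*k)) :
    af (2*k) (d + 1) < af (2*k) d ↔ ¬ d.val < k := by
  constructor
  · intro h hlt
    rw [af_succ_lt hk d hlt] at h; omega
  · intro h
    have := af_succ_ge hk d (by omega)
    omega

lemma af_neg (hk : 2 ≤ k) (d : ZMod (2*k)) : af (2*k) (-d) = af (2*k) d := by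
  haveI : NeZero (2*k) := ⟨by omega⟩
  have hv : d.val < 2*k := ZMod.val_lt d
  unfold af
  rw [ZMod.neg_val]
  split_ifs with h
  · subst h; simp
  · have : d.val ≠ 0 := fun hc => h (by rwa [ZMod.val_eq_zero] at hc)
    omega

lemma af_le_succ (hk : 2 ≤ k) (d : ZMod (2*k)) : af (2*k) (d + 1) ≤ af (2*k) d + 1 := by
  rcases Nat.lt_or_ge d.val k with h | h
  · rw [af_succ_lt hk d h]
  · have := af_succ_ge hk d h; omega

lemma af_pred_le (hk : 2 ≤ k) (d : ZMod (2*k)) : af (2*k) d ≤ af (2*k) (d + 1) + 1 := by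
  rcases Nat.lt_or_ge d.val k with h | h
  · rw [af_succ_lt hk d h]; omega
  · have := af_succ_ge hk d h; omega

lemma af_zero (hk : 2 ≤ k) : af (2*k) (0 : ZMod (2*k)) = 0 := by
  haveI : NeZero (2*k) := ⟨by omega⟩
  simp [af]

lemma eDist_mk (G : SimpleGraph V) (x y w : V) :
    eDist G s(x, y) w = min (G.dist x w) (G.dist y w) := rfl

lemma walk_lb (idx : V → ZMod (2*k)) (hk : 2 ≤ k)
    (haux : ∀ x y : V, G.Adj x y → idx x = idx y ∨ idx x = idx y + 1 ∨ idx y = idx x + 1) :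
    ∀ {x y : V} (w : G.Walk x y), af (2*k) (idx y - idx x) ≤ w.length := by
  intro x y w
  induction w with
  | nil =>
    rw [sub_self]
    simp [af]
  | @cons a b c h p ih =>
    rw [Walk.length_cons]
    rcases haux a b h with h1 | h1 | h1
    · rw [h1]; omega
    · have : idx c - idx a = (idx c - idx b) - 1 := by rw [h1]; ring
      rw [this]
      have := af_pred_le hk ((idx c - idx b) - 1)
      rw [sub_add_cancel] at this
      omega
    · have : idx c - idx a = (idx c - idx b) + 1 := by rw [h1]; ring
      rw [this]
      have := af_le_succ hk (idx c - idx b)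
      omega

lemma visits (idx : V → ZMod (2*k)) {S : Set (Sym2 V)}
    (hS : S = {f | ∃ i, f = s(u i, u (i + 1))})
    (hidx : ∀ x y : V, (G.deleteEdges S).Adj x y → idx x = idx y)
    (hIdxu : ∀ l, idx (u l) = l) :
    ∀ {x y : V} (w : G.Walk x y), idx x ≠ idx y → u (idx x) ∈ w.support := by
  intro x y w
  induction w with
  | nil => intro hne; exact absurd rfl hne
  | @cons a b c h p ih =>
    intro hne
    by_cases hmem : s(a, b) ∈ S
    · rw [hS] at hmem
      obtain ⟨l, hl⟩ := hmem
      rw [Sym2.eq_iff] at hl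
      have ha : a = u (idx a) := by
        rcases hl with ⟨h1, _⟩ | ⟨h1, h2⟩
        · rw [h1, hIdxu]
        · rw [h1, hIdxu]
      rw [← ha]; exact Walk.start_mem_support _
    · have hab : idx a = idx b := hidx a b (by rw [SimpleGraph.deleteEdges_adj]; exact ⟨h, hmem⟩)
      rw [Walk.support_cons]
      right
      rw [hab]
      exact ih (hab ▸ hne)

lemma dist_ub (hadj : ∀ i, G.Adj (u i) (u (i + 1))) :
    ∀ (t : ℕ) (i : ZMod (2*k)), G.dist (u i) (u (i + (t : ZMod (2*k)))) ≤ t := by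
  have h : ∀ (t : ℕ) (i : ZMod (2*k)),
      ∃ w : G.Walk (u i) (u (i + (t : ZMod (2*k)))), w.length = t := by
    intro t
    induction t with
    | zero =>
      intro i
      exact ⟨Walk.nil.copy rfl (by rw [Nat.cast_zero, add_zero]), by simp⟩
    | succ t ih =>
      intro i
      obtain ⟨w, hw⟩ := ih (i + 1)
      have : i + 1 + (t : ZMod (2*k)) = i + ((t + 1 : ℕ) : ZMod (2*k)) := by
        push_cast; ring
      refine ⟨Walk.cons (hadj i) (w.copy rfl (by rw [this])), ?_⟩
      rw [Walk.length_cons, Walk.length_copy, hw]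
  intro t i
  obtain ⟨w, hw⟩ := h t i
  calc G.dist (u i) (u (i + (t : ZMod (2*k)))) ≤ w.length := SimpleGraph.dist_le w
    _ = t := hw

lemma dist_uu_le (hk : 2 ≤ k) (hadj : ∀ i, G.Adj (u i) (u (i + 1))) (i j : ZMod (2*k)) :
    G.dist (u i) (u j) ≤ af (2*k) (j - i) := by
  haveI : NeZero (2*k) := ⟨by omega⟩
  by_cases hij : j = i
  · subst hij; rw [SimpleGraph.dist_self]; omega
  · have h1 : G.dist (u i) (u j) ≤ (j - i).val := by
      have := dist_ub hadj (j - i).val i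
      rwa [ZMod.natCast_val, ZMod.cast_id, add_sub_cancel] at this
    have h2 : G.dist (u i) (u j) ≤ (i - j).val := by
      have := dist_ub hadj (i - j).val j
      rw [ZMod.natCast_val, ZMod.cast_id, add_sub_cancel] at this
      rwa [SimpleGraph.dist_comm] at this
    have h3 : (i - j).val = 2*k - (j - i).val := by
      have : i - j = -(j - i) := by ring
      rw [this, ZMod.neg_val]
      split_ifs with h
      · exact absurd (by rwa [sub_eq_zero] at h) hij
      · rfl
    unfold af
    omega

lemma dist_eq (hk : 2 ≤ k) (hG : G.Connected)
    (hadj : ∀ i, G.Adj (u i) (u (i + 1)))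
    (idx : V → ZMod (2*k)) {S : Set (Sym2 V)}
    (hS : S = {f | ∃ i, f = s(u i, u (i + 1))})
    (haux : ∀ x y : V, G.Adj x y → idx x = idx y ∨ idx x = idx y + 1 ∨ idx y = idx x + 1)
    (hidx : ∀ x y : V, (G.deleteEdges S).Adj x y → idx x = idx y)
    (hIdxu : ∀ l, idx (u l) = l)
    (x : V) (j : ZMod (2*k)) :
    G.dist x (u j) = G.dist x (u (idx x)) + af (2*k) (j - idx x) := by
  classical
  by_cases hij : idx x = j
  · rw [hij, sub_self, af_zero hk, Nat.add_zero]
  · apply le_antisymm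
    · calc G.dist x (u j) ≤ G.dist x (u (idx x)) + G.dist (u (idx x)) (u j) :=
            hG.dist_triangle
        _ ≤ G.dist x (u (idx x)) + af (2*k) (j - idx x) := by
            have := dist_uu_le hk hadj (idx x) j
            omega
    · obtain ⟨w, hw⟩ := (hG x (u j)).exists_walk_length_eq_dist
      have hvis : u (idx x) ∈ w.support :=
        visits idx hS hidx hIdxu w (by rw [hIdxu]; exact hij)
      have hsplit := w.take_spec hvis
      have hlen : (w.takeUntil (u (idx x)) hvis).length
          + (w.dropUntil (u (idx x)) hvis).length = w.length := by
        rw [← Walk.length_append, hsplit]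
      have h1 : G.dist x (u (idx x)) ≤ (w.takeUntil (u (idx x)) hvis).length :=
        SimpleGraph.dist_le _
      have h2 : af (2*k) (j - idx x) ≤ (w.dropUntil (u (idx x)) hvis).length := by
        have := walk_lb idx hk haux (w.dropUntil (u (idx x)) hvis)
        rwa [hIdxu, hIdxu] at this
      omega

end Stmt6Aux

open SimpleGraph Stmt6Aux

/-- even-cycle bound
`Σ_{e=uv ∈ C_{2k}} (m_u(e|G) − m_v(e|G))² ≤ 2k(m − 2k)²`, with equality iff `C_{2k}` is an
end-block, i.e. at most one component of `G − E(C_{2k})` contains an edge. -/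
theorem stmt6 {V : Type*} [Fintype V] (G : SimpleGraph V) (hG : G.Connected)
    (k : ℕ) (hk : 2 ≤ k) (u : ZMod (2 * k) → V) (hinj : Function.Injective u)
    (hadj : ∀ i, G.Adj (u i) (u (i + 1)))
    (S : Set (Sym2 V)) (hS : S = {f | ∃ i, f = s(u i, u (i + 1))})
    (hcomp : Nat.card (G.deleteEdges S).ConnectedComponent = 2 * k) :
    (∑ j ∈ Finset.range (2 * k),
        ((mCloser G (u j) (u (j + 1)) : ℤ) - (mCloser G (u (j + 1)) (u j) : ℤ)) ^ 2) ≤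
      2 * k * ((G.edgeFinset.card : ℤ) - 2 * k) ^ 2 ∧
    ((∑ j ∈ Finset.range (2 * k),
        ((mCloser G (u j) (u (j + 1)) : ℤ) - (mCloser G (u (j + 1)) (u j) : ℤ)) ^ 2) =
      2 * k * ((G.edgeFinset.card : ℤ) - 2 * k) ^ 2 ↔
      {c : (G.deleteEdges S).ConnectedComponent |
        (compEdges (G.deleteEdges S) c).Nonempty}.Subsingleton) := by
  classical
  haveI : NeZero (2*k) := ⟨by omega⟩
  set G' := G.deleteEdges S with hG'def
  set c : ZMod (2*k) → G'.ConnectedComponent :=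
    (fun i => G'.connectedComponentMk (u i)) with hcdef
  -- every vertex is reachable in `G'` from some cycle vertex
  have hreach : ∀ x : V, ∃ i, G'.Reachable x (u i) := by
    have key : ∀ {x y : V}, G.Walk x y → ∀ i : ZMod (2*k), y = u i →
        ∃ i', G'.Reachable x (u i') := by
      intro x y w
      induction w with
      | nil => intro i hi; exact ⟨i, by rw [hi]⟩
      | @cons a b cc h p ih =>
        intro i hi
        obtain ⟨j, hj⟩ := ih i hi
        by_cases hmem : s(a,b) ∈ S
        · rw [hS] at hmem; obtain ⟨l, hl⟩ := hmem
          rw [Sym2.eq_iff] at hl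
          rcases hl with ⟨h1, _⟩ | ⟨h1, _⟩
          · exact ⟨l, by rw [h1]⟩
          · exact ⟨l+1, by rw [h1]⟩
        · have hA : G'.Adj a b := by
            rw [hG'def, SimpleGraph.deleteEdges_adj]; exact ⟨h, hmem⟩
          exact ⟨j, hA.reachable.trans hj⟩
    intro x
    obtain ⟨w⟩ := hG x (u 0)
    exact key w 0 rfl
  have hsurj : Function.Surjective c := by
    intro C
    obtain ⟨x, hx⟩ := C.exists_rep
    obtain ⟨i, hi⟩ := hreach x
    exact ⟨i, by rw [hcdef]; rw [← hx]; exact (ConnectedComponent.sound hi).symm⟩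
  have hbij : Function.Bijective c :=
    (Nat.bijective_iff_surjective_and_card c).mpr ⟨hsurj, by rw [Nat.card_zmod, hcomp]⟩
  have hcinj : Function.Injective c := hbij.injective
  set idx : V → ZMod (2*k) := (fun x => (hreach x).choose) with hidxdef
  have hidxC : ∀ x : V, G'.connectedComponentMk x = c (idx x) :=
    fun x => ConnectedComponent.sound (hreach x).choose_spec
  have hIdxu : ∀ l, idx (u l) = l := by
    intro l
    apply hcinj
    rw [← hidxC (u l)]
  have hidxAdj : ∀ x y : V, G'.Adj x y → idx x = idx y := by
    intro x y h
    apply hcinj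
    rw [← hidxC x, ← hidxC y]
    exact ConnectedComponent.connectedComponentMk_eq_of_adj h
  have haux : ∀ x y : V, G.Adj x y →
      idx x = idx y ∨ idx x = idx y + 1 ∨ idx y = idx x + 1 := by
    intro x y h
    by_cases hmem : s(x,y) ∈ S
    · rw [hS] at hmem; obtain ⟨l, hl⟩ := hmem
      rw [Sym2.eq_iff] at hl
      rcases hl with ⟨h1, h2⟩ | ⟨h1, h2⟩
      · right; right; rw [h1, h2, hIdxu, hIdxu]
      · right; left; rw [h1, h2, hIdxu, hIdxu]
    · left
      exact hidxAdj x y (by rw [hG'def, SimpleGraph.deleteEdges_adj]; exact ⟨h, hmem⟩)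
  -- the cycle edges as a finset
  have hedgeinj : Function.Injective (fun l : ZMod (2*k) => s(u l, u (l+1))) := by
    intro a b hab
    simp only [Sym2.eq_iff] at hab
    rcases hab with ⟨h1, h2⟩ | ⟨h1, h2⟩
    · exact hinj h1
    · exfalso
      have ha : a = b + 1 := hinj h1
      have hb : b = a + 1 := hinj h2.symm
      rw [hb] at ha
      have h2z : ((2:ℕ) : ZMod (2*k)) = 0 := by
        push_cast
        linear_combination ha.symm
      rw [ZMod.natCast_eq_zero_iff] at h2z
      have := Nat.le_of_dvd (by norm_num) h2z
      omega
  set Sfin : Finset (Sym2 V) :=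
    Finset.image (fun l : ZMod (2*k) => s(u l, u (l+1))) Finset.univ with hSfindef
  have hmemS : ∀ f, f ∈ Sfin ↔ f ∈ S := by
    intro f
    rw [hSfindef, hS]
    simp only [Finset.mem_image, Finset.mem_univ, true_and, Set.mem_setOf_eq]
    exact exists_congr fun l => eq_comm
  have hSsub : Sfin ⊆ G.edgeFinset := by
    intro f hf
    rw [hSfindef] at hf
    simp only [Finset.mem_image, Finset.mem_univ, true_and] at hf
    obtain ⟨l, rfl⟩ := hf
    rw [SimpleGraph.mem_edgeFinset, SimpleGraph.mem_edgeSet]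
    exact hadj l
  have hScard : Sfin.card = 2*k := by
    rw [hSfindef, Finset.card_image_of_injective _ hedgeinj, Finset.card_univ, ZMod.card]
  set A : ZMod (2*k) → Finset (Sym2 V) := (fun i => compEdges G' (c i)) with hAdef
  have hmemA : ∀ (f : Sym2 V) (i : ZMod (2*k)),
      f ∈ A i ↔ f ∈ G'.edgeSet ∧ ∀ x ∈ f, G'.connectedComponentMk x = c i := by
    intro f i
    rw [hAdef]
    simp only [compEdges, Finset.mem_filter, SimpleGraph.mem_edgeFinset]
  have hpart : G.edgeFinset \ Sfin = Finset.univ.biUnion A := by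
    ext f
    induction f using Sym2.ind with
    | _ x y =>
      constructor
      · intro hf
        rw [Finset.mem_sdiff] at hf
        obtain ⟨hf1, hf2⟩ := hf
        rw [SimpleGraph.mem_edgeFinset, SimpleGraph.mem_edgeSet] at hf1
        have hnS : s(x,y) ∉ S := fun hc => hf2 ((hmemS _).mpr hc)
        have hA : G'.Adj x y := by
          rw [hG'def, SimpleGraph.deleteEdges_adj]; exact ⟨hf1, hnS⟩
        rw [Finset.mem_biUnion]
        refine ⟨idx x, Finset.mem_univ _, (hmemA _ _).mpr ⟨hA, ?_⟩⟩
        intro z hz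
        rw [Sym2.mem_iff] at hz
        rcases hz with rfl | rfl
        · exact hidxC z
        · rw [ConnectedComponent.connectedComponentMk_eq_of_adj hA.symm]
          exact hidxC x
      · intro hf
        rw [Finset.mem_biUnion] at hf
        obtain ⟨i, _, hfi⟩ := hf
        obtain ⟨hf1, _⟩ := (hmemA _ _).mp hfi
        rw [hG'def, SimpleGraph.edgeSet_deleteEdges] at hf1
        rw [Finset.mem_sdiff, SimpleGraph.mem_edgeFinset]
        exact ⟨hf1.1, fun hc => hf1.2 ((hmemS _).mp hc)⟩
  have hdisj : ∀ i ∈ (Finset.univ : Finset (ZMod (2*k))), ∀ j ∈ Finset.univ,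
      i ≠ j → Disjoint (A i) (A j) := by
    intro i _ j _ hij
    rw [Finset.disjoint_left]
    intro f hfi hfj
    obtain ⟨hf1, hf2⟩ := (hmemA f i).mp hfi
    obtain ⟨_, hf2'⟩ := (hmemA f j).mp hfj
    induction f using Sym2.ind with
    | _ x y =>
      have h1 := hf2 x (Sym2.mem_mk_left x y)
      have h2 := hf2' x (Sym2.mem_mk_left x y)
      exact hij (hcinj (h1 ▸ h2))
  -- distance formulas
  have hdist : ∀ (x : V) (j' : ZMod (2*k)),
      G.dist x (u j') = G.dist x (u (idx x)) + af (2*k) (j' - idx x) :=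
    dist_eq hk hG hadj idx hS haux hidxAdj hIdxu
  have hEcyc : ∀ (l j' : ZMod (2*k)),
      eDist G s(u l, u (l+1)) (u j')
        = min (af (2*k) (j' - l)) (af (2*k) (j' - (l+1))) := by
    intro l j'
    have h1 := hdist (u l) j'
    rw [hIdxu, SimpleGraph.dist_self] at h1
    have h2 := hdist (u (l+1)) j'
    rw [hIdxu, SimpleGraph.dist_self] at h2
    rw [eDist_mk, h1, h2]
    omega
  have hEcomp : ∀ (i : ZMod (2*k)), ∀ f ∈ A i, ∃ m : ℕ,
      ∀ j' : ZMod (2*k), eDist G f (u j') = m + af (2*k) (j' - i) := by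
    intro i f hf
    obtain ⟨hf1, hf2⟩ := (hmemA f i).mp hf
    revert hf2
    induction f using Sym2.ind with
    | _ x y =>
      intro hf2
      have hx : idx x = i := hcinj (by rw [← hidxC x]; exact hf2 x (Sym2.mem_mk_left x y))
      have hy : idx y = i := hcinj (by rw [← hidxC y]; exact hf2 y (Sym2.mem_mk_right x y))
      refine ⟨min (G.dist x (u i)) (G.dist y (u i)), fun j' => ?_⟩
      have h1 := hdist x j'
      rw [hx] at h1
      have h2 := hdist y j'
      rw [hy] at h2
      rw [eDist_mk, h1, h2]
      omega
  -- the main counting identity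
  set a : ZMod (2*k) → ℤ := (fun i => ((A i).card : ℤ)) with hadef
  set M : ℤ := ∑ i : ZMod (2*k), a i with hMdef
  set Sg : ZMod (2*k) → ℤ :=
    (fun j => ∑ i ∈ Finset.univ.filter (fun i : ZMod (2*k) => (j - i).val < k), a i)
    with hSgdef
  have hanonneg : ∀ i, 0 ≤ a i := fun i => Int.natCast_nonneg _
  have hMcard : (G.edgeFinset.card : ℤ) = 2*k + M := by
    have h1 : (G.edgeFinset \ Sfin).card + Sfin.card = G.edgeFinset.card :=
      Finset.card_sdiff_add_card_eq_card hSsub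
    have h2 : (G.edgeFinset \ Sfin).card = ∑ i : ZMod (2*k), (A i).card := by
      rw [hpart, Finset.card_biUnion hdisj]
    rw [hMdef, hadef]
    push_cast
    rw [← h1, h2, hScard]
    push_cast
    ring
  have hD : ∀ j : ZMod (2*k),
      (mCloser G (u j) (u (j+1)) : ℤ) - (mCloser G (u (j+1)) (u j) : ℤ)
        = 2 * Sg j - M := by
    intro j
    have hcast : ∀ v w : V, (mCloser G v w : ℤ)
        = ∑ f ∈ G.edgeFinset, (if eDist G f v < eDist G f w then (1:ℤ) else 0) := by
      intro v w
      unfold mCloser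
      rw [Finset.card_filter]
      push_cast
      rfl
    rw [hcast, hcast, ← Finset.sum_sub_distrib]
    set g : Sym2 V → ℤ := (fun f =>
      (if eDist G f (u j) < eDist G f (u (j+1)) then (1:ℤ) else 0)
        - (if eDist G f (u (j+1)) < eDist G f (u j) then (1:ℤ) else 0)) with hgdef
    have hsplit : ∑ f ∈ G.edgeFinset, g f
        = ∑ f ∈ Sfin, g f + ∑ f ∈ G.edgeFinset \ Sfin, g f := by
      rw [add_comm, Finset.sum_sdiff hSsub]
    -- cycle edges contribute zero
    have hcyczero : ∑ f ∈ Sfin, g f = 0 := by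
      rw [hSfindef, Finset.sum_image (fun x _ y _ h => hedgeinj h)]
      set h : ZMod (2*k) → ℤ := (fun l => g s(u l, u (l+1))) with hhdef
      have hrev : ∑ l : ZMod (2*k), h l = ∑ l : ZMod (2*k), h (j + j - l) :=
        (Fintype.sum_equiv (Equiv.subLeft (j + j)) (fun l => h (j + j - l)) h
          (fun x => rfl)).symm
      have hneg : ∀ l, h (j + j - l) = - h l := by
        intro l
        have s1 : eDist G s(u (j+j-l), u ((j+j-l)+1)) (u j)
            = eDist G s(u l, u (l+1)) (u (j+1)) := by
          rw [hEcyc, hEcyc,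
            show j - (j+j-l) = -(j-l) by ring,
            show j - ((j+j-l)+1) = -(j+1-l) by ring,
            show (j+1) - (l+1) = j - l by ring,
            af_neg hk, af_neg hk]
          exact min_comm _ _
        have s2 : eDist G s(u (j+j-l), u ((j+j-l)+1)) (u (j+1))
            = eDist G s(u l, u (l+1)) (u j) := by
          rw [hEcyc, hEcyc,
            show (j+1) - (j+j-l) = -(j-(l+1)) by ring,
            show (j+1) - ((j+j-l)+1) = -(j-l) by ring,
            af_neg hk, af_neg hk]
          exact min_comm _ _
        rw [hhdef]
        simp only [hgdef]
        rw [s1, s2]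
        split_ifs <;> omega
      have : ∑ l : ZMod (2*k), h l = - ∑ l : ZMod (2*k), h l := by
        calc ∑ l : ZMod (2*k), h l = ∑ l : ZMod (2*k), h (j + j - l) := hrev
          _ = ∑ l : ZMod (2*k), - h l := Finset.sum_congr rfl (fun l _ => hneg l)
          _ = - ∑ l : ZMod (2*k), h l := Finset.sum_neg_distrib _
      linarith
    -- component edges
    have hcompsum : ∑ f ∈ G.edgeFinset \ Sfin, g f
        = ∑ i : ZMod (2*k), (if (j - i).val < k then a i else - a i) := by
      rw [hpart, Finset.sum_biUnion hdisj]
      refine Finset.sum_congr rfl (fun i _ => ?_)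
      have hgval : ∀ f ∈ A i, g f = (if (j - i).val < k then (1:ℤ) else -1) := by
        intro f hf
        obtain ⟨m, hm⟩ := hEcomp i f hf
        have e1 := hm j
        have e2 := hm (j+1)
        rw [show (j+1) - i = (j - i) + 1 by ring] at e2
        rw [hgdef]
        simp only
        rw [e1, e2]
        rcases Nat.lt_or_ge (j - i).val k with hc | hc
        · have := af_succ_lt hk (j - i) hc
          split_ifs <;> omega
        · have := af_succ_ge hk (j - i) hc
          split_ifs <;> omega
      rw [Finset.sum_congr rfl hgval, Finset.sum_const, hadef]
      simp only [nsmul_eq_mul]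
      split_ifs <;> ring
    rw [hsplit, hcyczero, hcompsum, zero_add]
    rw [Finset.sum_ite, Finset.sum_neg_distrib]
    have hM2 : M = Sg j + ∑ i ∈ Finset.univ.filter (fun i : ZMod (2*k) => ¬ (j - i).val < k), a i := by
      rw [hMdef, hSgdef, Finset.sum_filter_add_sum_filter_not]
    rw [hSgdef]
    simp only at hM2 ⊢
    linarith [hM2]
  -- basic bounds
  have hSgnonneg : ∀ j, 0 ≤ Sg j := fun j => Finset.sum_nonneg (fun i _ => hanonneg i)
  have hSgleM : ∀ j, Sg j ≤ M := fun j =>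
    Finset.sum_le_sum_of_subset_of_nonneg (Finset.filter_subset _ _) (fun i _ _ => hanonneg i)
  have hsqle : ∀ j : ZMod (2*k), (2 * Sg j - M)^2 ≤ M^2 := fun j => by
    nlinarith [mul_nonneg (hSgnonneg j) (sub_nonneg.mpr (hSgleM j))]
  have hm2k : (G.edgeFinset.card : ℤ) - 2*k = M := by rw [hMcard]; ring
  have hterm : ∀ j ∈ Finset.range (2*k),
      ((mCloser G (u j) (u (j + 1)) : ℤ) - (mCloser G (u (j + 1)) (u j) : ℤ)) ^ 2
        = (2 * Sg (j : ZMod (2*k)) - M)^2 := by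
    intro j _
    rw [hD ((j : ZMod (2*k)))]
  rw [Finset.sum_congr rfl hterm, hm2k]
  have hconstsum : ∑ _j ∈ Finset.range (2*k), M^2 = 2*k * M^2 := by
    rw [Finset.sum_const, Finset.card_range, nsmul_eq_mul]
    push_cast
    ring
  -- translation between nonzero components and nonempty compEdges
  have hane : ∀ i : ZMod (2*k), a i ≠ 0 ↔ (compEdges G' (c i)).Nonempty := by
    intro i
    rw [hadef]
    simp only
    rw [Ne, Int.natCast_eq_zero]
    constructor
    · intro h
      exact Finset.card_pos.mp (Nat.pos_of_ne_zero h)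
    · intro h
      exact (Finset.card_pos.mpr h).ne'
  constructor
  · -- the inequality
    calc ∑ j ∈ Finset.range (2*k), (2 * Sg (j : ZMod (2*k)) - M)^2
        ≤ ∑ _j ∈ Finset.range (2*k), M^2 :=
          Finset.sum_le_sum (fun j _ => hsqle _)
      _ = 2*k * M^2 := hconstsum
  constructor
  · -- equality → end-block
    intro heq
    have hall : ∀ j ∈ Finset.range (2*k), (2 * Sg (j : ZMod (2*k)) - M)^2 = M^2 := by
      by_contra hcon
      push_neg at hcon
      obtain ⟨j0, hj0, hne⟩ := hcon
      have hstrict : ∑ j ∈ Finset.range (2*k), (2 * Sg (j : ZMod (2*k)) - M)^2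
          < ∑ _j ∈ Finset.range (2*k), M^2 :=
        Finset.sum_lt_sum (fun j _ => hsqle _) ⟨j0, hj0, lt_of_le_of_ne (hsqle _) hne⟩
      rw [heq, hconstsum] at hstrict
      exact lt_irrefl _ hstrict
    have hallZ : ∀ j : ZMod (2*k), Sg j = 0 ∨ Sg j = M := by
      intro j
      have hj := hall j.val (Finset.mem_range.mpr (ZMod.val_lt j))
      rw [ZMod.natCast_val, ZMod.cast_id] at hj
      have h5 : Sg j * (Sg j - M) = 0 := by nlinarith [hj]
      rcases mul_eq_zero.mp h5 with h | h
      · left; exact h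
      · right; linarith
    have huniq : ∀ i i' : ZMod (2*k), a i ≠ 0 → a i' ≠ 0 → i = i' := by
      intro i i' hi hi'
      by_contra hne
      set d' := (i' - i).val with hd'
      have hd0 : d' ≠ 0 := by
        rw [hd', Ne, ZMod.val_eq_zero, sub_eq_zero]
        exact fun h => hne h.symm
      have hdlt : d' < 2*k := ZMod.val_lt _
      have hii' : i' - i = (d' : ZMod (2*k)) := by
        rw [hd', ZMod.natCast_val, ZMod.cast_id]
      set e : ℕ := if d' ≤ k then 0 else d' - k with hedef
      have helt : e < k := by rw [hedef]; split_ifs <;> omega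
      set j : ZMod (2*k) := i + (e : ZMod (2*k)) with hjdef
      have hji : (j - i).val < k := by
        rw [hjdef, add_sub_cancel_left, ZMod.val_cast_of_lt (by omega)]
        exact helt
      have hji' : ¬ (j - i').val < k := by
        rcases le_or_gt d' k with hle | hgt
        · have he0 : e = 0 := by rw [hedef, if_pos hle]
          have hji2 : j - i' = - (d' : ZMod (2*k)) := by
            rw [hjdef, he0]
            push_cast
            linear_combination - hii'
          rw [hji2, ZMod.neg_val]
          split_ifs with h0
          · exfalso
            rw [← hii', sub_eq_zero] at h0
            exact hne h0.symm
          · rw [ZMod.val_cast_of_lt hdlt]; omega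
        · have he : e = d' - k := by rw [hedef, if_neg (by omega)]
          have hcast : ((d' - k : ℕ) : ZMod (2*k)) = (d' : ZMod (2*k)) - (k : ZMod (2*k)) := by
            rw [Nat.cast_sub hgt.le]
          have hji2 : j - i' = - (k : ZMod (2*k)) := by
            rw [hjdef, he, hcast]
            linear_combination - hii'
          have hkval : ((k:ℕ) : ZMod (2*k)).val = k := ZMod.val_cast_of_lt (by omega)
          rw [hji2, ZMod.neg_val]
          split_ifs with h0
          · exfalso
            rw [h0, ZMod.val_zero] at hkval
            omega
          · rw [hkval]; omega
      have hmemi : i ∈ Finset.univ.filter (fun i0 : ZMod (2*k) => (j - i0).val < k) :=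
        Finset.mem_filter.mpr ⟨Finset.mem_univ _, hji⟩
      have hpos : 0 < Sg j :=
        lt_of_lt_of_le (lt_of_le_of_ne (hanonneg i) (Ne.symm hi))
          (Finset.single_le_sum (fun i0 _ => hanonneg i0) hmemi)
      have hSgM : Sg j = M := by
        rcases hallZ j with h | h
        · exfalso; rw [h] at hpos; exact lt_irrefl _ hpos
        · exact h
      have hrest : ∑ i0 ∈ Finset.univ.filter (fun i0 : ZMod (2*k) => ¬ (j - i0).val < k),
          a i0 = 0 := by
        have hsplit2 := Finset.sum_filter_add_sum_filter_not Finset.univ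
          (fun i0 : ZMod (2*k) => (j - i0).val < k) a
        have : Sg j = ∑ i0 ∈ Finset.univ.filter (fun i0 : ZMod (2*k) => (j - i0).val < k),
            a i0 := by rw [hSgdef]
        have hMs : M = ∑ i : ZMod (2*k), a i := hMdef
        linarith [hsplit2, this, hSgM]
      have hzero' : a i' = 0 :=
        (Finset.sum_eq_zero_iff_of_nonneg (fun i0 _ => hanonneg i0)).mp hrest i'
          (Finset.mem_filter.mpr ⟨Finset.mem_univ _, hji'⟩)
      exact hi' hzero'
    intro C1 hC1 C2 hC2
    obtain ⟨i1, rfl⟩ := hsurj C1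
    obtain ⟨i2, rfl⟩ := hsurj C2
    exact congrArg c (huniq i1 i2 ((hane i1).mpr hC1) ((hane i2).mpr hC2))
  · -- end-block → equality
    intro hsub
    have huniq : ∀ i i' : ZMod (2*k), a i ≠ 0 → a i' ≠ 0 → i = i' := by
      intro i i' hi hi'
      exact hcinj (hsub ((hane i).mp hi) ((hane i').mp hi'))
    have hterm2 : ∀ j ∈ Finset.range (2*k), (2 * Sg (j : ZMod (2*k)) - M)^2 = M^2 := by
      intro j _
      by_cases hex : ∃ i, a i ≠ 0
      · obtain ⟨i0, hi0⟩ := hex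
        have hzero : ∀ i, i ≠ i0 → a i = 0 := by
          intro i hne
          by_contra h
          exact hne (huniq i i0 h hi0)
        have hMa : M = a i0 := by
          rw [hMdef]
          exact Finset.sum_eq_single i0 (fun b _ hb => hzero b hb)
            (fun h => absurd (Finset.mem_univ i0) h)
        by_cases hmem : i0 ∈ Finset.univ.filter
            (fun i : ZMod (2*k) => (((j : ZMod (2*k))) - i).val < k)
        · have hSgv : Sg (j : ZMod (2*k)) = a i0 :=
            Finset.sum_eq_single i0 (fun b _ hb => hzero b hb) (fun h => absurd hmem h)
          rw [hSgv, ← hMa]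
          ring
        · have hSgv : Sg (j : ZMod (2*k)) = 0 :=
            Finset.sum_eq_zero (fun b hb => hzero b (fun h => hmem (h ▸ hb)))
          rw [hSgv]
          ring
      · push_neg at hex
        have hM0 : M = 0 := by rw [hMdef]; exact Finset.sum_eq_zero (fun i _ => hex i)
        have hS0 : Sg (j : ZMod (2*k)) = 0 := Finset.sum_eq_zero (fun i _ => hex i)
        rw [hM0, hS0]
        ring
    rw [Finset.sum_congr rfl hterm2, hconstsum]
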